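/- Under the ball-constraint assumption, the dual (DSDP) is strictly feasible: there exists α ∈ ℝ^K with α_k > 0 for all k ∈ K such that the matrix C + Σ_{k∈K} α_k A_k is positive definite. (Such an α can be built by taking α_k = 1 for every non-ball constraint k, setting C' = C + Σ_{non-ball k} A_k, and taking α_i = μ for the n ball constraints with μ ≥ 1 + max(0, −λ_min(C')), using that the ball-constraint matrices sum to the identity matrix of size 2n.) -/

import Mathlib

open Matrix

noncomputable section

/-- Index of the real part of the voltage at node `i` among the `2n` coordinates. -/
def idx1 (n : ℕ) (i : Fin n) : Fin (2 * n) := ⟨i.val, by have := i.isLt; omega⟩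

/-- Index of the imaginary part of the voltage at node `i` among the `2n` coordinates. -/
def idx2 (n : ℕ) (i : Fin n) : Fin (2 * n) := ⟨i.val + n, by have := i.isLt; omega⟩

/-- The matrix of the ball constraint at node `i`: diagonal, with ones exactly in
positions `(i,i)` and `(i+n, i+n)`. -/
def ballMat (n : ℕ) (i : Fin n) : Matrix (Fin (2 * n)) (Fin (2 * n)) ℝ :=
  Matrix.diagonal (fun j => if j = idx1 n i ∨ j = idx2 n i then 1 else 0)

lemma ball_indicator {n : ℕ} (j : Fin (2 * n)) :
    ∑ i : Fin n, (if j = idx1 n i ∨ j = idx2 n i then (1 : ℝ) else 0) = 1 := by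
  have hj := j.isLt
  by_cases h : j.val < n
  · rw [Finset.sum_eq_single (⟨j.val, h⟩ : Fin n)]
    · rw [if_pos]; left; simp [idx1, Fin.ext_iff]
    · intro i _ hi
      rw [if_neg]
      have hi' := i.isLt
      have hne : i.val ≠ j.val := fun hh => hi (Fin.ext hh)
      simp only [idx1, idx2, Fin.ext_iff, not_or]
      omega
    · simp
  · rw [Finset.sum_eq_single (⟨j.val - n, by omega⟩ : Fin n)]
    · rw [if_pos]; right; simp only [idx2, Fin.ext_iff]; omega
    · intro i _ hi
      rw [if_neg]
      have hi' := i.isLt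
      have hne : i.val ≠ j.val - n := fun hh => hi (Fin.ext hh)
      simp only [idx1, idx2, Fin.ext_iff, not_or]
      omega
    · simp

lemma sum_ballMat {n : ℕ} :
    ∑ i : Fin n, ballMat n i = (1 : Matrix (Fin (2 * n)) (Fin (2 * n)) ℝ) := by
  ext j l
  simp only [Matrix.sum_apply, ballMat, Matrix.diagonal_apply, Matrix.one_apply]
  by_cases hjl : j = l
  · subst hjl
    simp only [if_pos rfl]
    exact ball_indicator j
  · simp [hjl]

lemma quad_lower {m : Type} [Fintype m] (M : Matrix m m ℝ) (x : m → ℝ) :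
    -((∑ i, ∑ j, |M i j|) * ∑ i, x i ^ 2) ≤ x ⬝ᵥ (M *ᵥ x) := by
  set S := ∑ i, x i ^ 2 with hS
  have hsq : ∀ i, x i ^ 2 ≤ S := fun i =>
    Finset.single_le_sum (fun j _ => sq_nonneg (x j)) (Finset.mem_univ i)
  have key : ∀ i j, -(|M i j| * S) ≤ x i * (M i j * x j) := by
    intro i j
    have h1 : |x i * (M i j * x j)| ≤ |M i j| * S := by
      rw [abs_mul, abs_mul]
      have : |x i| * (|M i j| * |x j|) = |M i j| * (|x i| * |x j|) := by ring
      rw [this]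
      apply mul_le_mul_of_nonneg_left _ (abs_nonneg _)
      nlinarith [hsq i, hsq j, sq_abs (x i), sq_abs (x j), sq_nonneg (|x i| - |x j|)]
    linarith [neg_abs_le (x i * (M i j * x j))]
  calc -((∑ i, ∑ j, |M i j|) * S) = ∑ i, ∑ j, -(|M i j| * S) := by
        rw [Finset.sum_mul]
        simp_rw [Finset.sum_mul, Finset.sum_neg_distrib]
    _ ≤ ∑ i, ∑ j, x i * (M i j * x j) :=
        Finset.sum_le_sum fun i _ => Finset.sum_le_sum fun j _ => key i j
    _ = x ⬝ᵥ (M *ᵥ x) := by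
        simp [dotProduct, Matrix.mulVec, Finset.mul_sum]

lemma shift_posdef {m : Type} [Fintype m] [DecidableEq m]
    (M : Matrix m m ℝ) (hM : M.IsHermitian) :
    (M + ((∑ i, ∑ j, |M i j|) + 1) • (1 : Matrix m m ℝ)).PosDef := by
  set T := ∑ i, ∑ j, |M i j| with hT
  have h1h : ((T + 1) • (1 : Matrix m m ℝ)).IsHermitian := by
    rw [Matrix.IsHermitian, Matrix.conjTranspose_smul, Matrix.conjTranspose_one, star_trivial]
  rw [Matrix.posDef_iff_dotProduct_mulVec]
  refine ⟨hM.add h1h, ?_⟩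
  intro x hx
  have hS : 0 < ∑ i, x i ^ 2 := by
    have : ∃ i, x i ≠ 0 := by
      by_contra hc
      push_neg at hc
      exact hx (funext hc)
    obtain ⟨i, hi⟩ := this
    have : 0 < x i ^ 2 := by positivity
    exact lt_of_lt_of_le this (Finset.single_le_sum (fun j _ => sq_nonneg (x j)) (Finset.mem_univ i))
  have hmv : (M + (T + 1) • (1 : Matrix m m ℝ)) *ᵥ x = M *ᵥ x + (T + 1) • x := by
    rw [Matrix.add_mulVec, Matrix.smul_mulVec, Matrix.one_mulVec]
  have hstar : (star x : m → ℝ) = x := by simp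
  rw [hstar, hmv, dotProduct_add]
  have h2 : x ⬝ᵥ (T + 1) • x = (T + 1) * ∑ i, x i ^ 2 := by
    rw [dotProduct_smul, smul_eq_mul]
    congr 1
    simp [dotProduct, sq]
  rw [h2]
  have := quad_lower M x
  nlinarith

/-- under the ball-constraint assumption, the dual (DSDP) is strictly feasible:
there is `α` with all entries positive such that `C + Σ_k α_k A_k` is positive definite. -/
theorem stmt_1 {n : ℕ} (hn : 0 < n) {K : Type} [Fintype K]
    (C : Matrix (Fin (2 * n)) (Fin (2 * n)) ℝ) (hC : C.IsSymm)
    (A : K → Matrix (Fin (2 * n)) (Fin (2 * n)) ℝ) (hA : ∀ k, (A k).IsSymm)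
    (b : K → ℝ)
    (e : Fin n → K) (he : Function.Injective e)
    (V : Fin n → ℝ) (hV : ∀ i, 0 < V i)
    (hball : ∀ i : Fin n, A (e i) = ballMat n i)
    (hb : ∀ i : Fin n, b (e i) = (V i) ^ 2) :
    ∃ α : K → ℝ, (∀ k, 0 < α k) ∧ (C + ∑ k, α k • A k).PosDef := by
  classical
  set s : Finset K := Finset.univ.image e with hs
  set M : Matrix (Fin (2 * n)) (Fin (2 * n)) ℝ := C + ∑ k ∈ sᶜ, A k with hM
  set T : ℝ := ∑ i, ∑ j, |M i j| with hT
  have hT0 : 0 ≤ T := Finset.sum_nonneg fun i _ =>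
    Finset.sum_nonneg fun j _ => abs_nonneg _
  set μ : ℝ := T + 1 with hμ
  refine ⟨fun k => if k ∈ s then μ else 1, ?_, ?_⟩
  · intro k
    by_cases h : k ∈ s <;> simp [h, hμ] <;> linarith
  · have hsplit : ∑ k, (if k ∈ s then μ else 1) • A k
        = μ • (1 : Matrix (Fin (2 * n)) (Fin (2 * n)) ℝ) + ∑ k ∈ sᶜ, A k := by
      rw [← Finset.sum_add_sum_compl s]
      congr 1
      · have h1 : ∑ k ∈ s, (if k ∈ s then μ else 1) • A k = ∑ k ∈ s, μ • A k :=
          Finset.sum_congr rfl fun k hk => by rw [if_pos hk]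
        rw [h1, ← Finset.smul_sum, hs, Finset.sum_image (fun i _ j _ h => he h)]
        simp_rw [hball]
        rw [sum_ballMat]
      · exact Finset.sum_congr rfl fun k hk => by
          rw [if_neg (by simpa using Finset.mem_compl.mp hk), one_smul]
    rw [hsplit]
    have heq : C + (μ • (1 : Matrix (Fin (2 * n)) (Fin (2 * n)) ℝ) + ∑ k ∈ sᶜ, A k)
        = M + μ • 1 := by rw [hM]; abel
    rw [heq]
    have hMh : M.IsHermitian := by
      rw [Matrix.IsHermitian, Matrix.conjTranspose_eq_transpose_of_trivial]
      rw [hM, Matrix.transpose_add, hC.eq, Matrix.transpose_sum]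
      congr 1
      exact Finset.sum_congr rfl fun k _ => (hA k).eq
    exact shift_posdef M hMh
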